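/- Let S be the unilateral shift on H = ℓ²(ℕ, K), and let M₁ = M_{Ψ₁}(ℓ²(ℕ, W₁)) and M₂ = M_{Ψ₂}(ℓ²(ℕ, W₂)) be S-invariant subspaces given by isometric multi-analytic operators M_{Ψ₁}, M_{Ψ₂} (intertwining the respective shifts with S). Then M₁ ⊆ M₂ if and only if there is an isometric multi-analytic operator M_Ψ : ℓ²(ℕ, W₁) → ℓ²(ℕ, W₂) (intertwining the shifts) with M_{Ψ₁} = M_{Ψ₂} M_Ψ; in that case Ψ = M_{Ψ₂}* M_{Ψ₁}|_{W₁}. -/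

import Mathlib

open Filter Topology

/-- Nested invariant subspaces: for `S`-invariant subspaces
`M₁ = M_{Ψ₁}(ℓ²(ℕ,W₁))`, `M₂ = M_{Ψ₂}(ℓ²(ℕ,W₂))` given by isometric
multi-analytic operators, `M₁ ⊆ M₂` iff `M_{Ψ₁} = M_{Ψ₂} M_Ψ` for an isometric
multi-analytic `M_Ψ`; in that case `M_Ψ = M_{Ψ₂}* M_{Ψ₁}`. -/
theorem nested_invariant_subspaces_shift
    {K W₁ W₂ : Type*}
    [NormedAddCommGroup K] [InnerProductSpace ℂ K] [CompleteSpace K]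
    [NormedAddCommGroup W₁] [InnerProductSpace ℂ W₁] [CompleteSpace W₁]
    [NormedAddCommGroup W₂] [InnerProductSpace ℂ W₂] [CompleteSpace W₂]
    (S : lp (fun _ : ℕ => K) 2 →L[ℂ] lp (fun _ : ℕ => K) 2)
    (hS : ∀ x : lp (fun _ : ℕ => K) 2, (S x) 0 = 0 ∧ ∀ n : ℕ, (S x) (n + 1) = x n)
    (S₁ : lp (fun _ : ℕ => W₁) 2 →L[ℂ] lp (fun _ : ℕ => W₁) 2)
    (hS₁ : ∀ x : lp (fun _ : ℕ => W₁) 2, (S₁ x) 0 = 0 ∧ ∀ n : ℕ, (S₁ x) (n + 1) = x n)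
    (S₂ : lp (fun _ : ℕ => W₂) 2 →L[ℂ] lp (fun _ : ℕ => W₂) 2)
    (hS₂ : ∀ x : lp (fun _ : ℕ => W₂) 2, (S₂ x) 0 = 0 ∧ ∀ n : ℕ, (S₂ x) (n + 1) = x n)
    (A₁ : lp (fun _ : ℕ => W₁) 2 →L[ℂ] lp (fun _ : ℕ => K) 2)
    (hA₁iso : ∀ x, ‖A₁ x‖ = ‖x‖) (hA₁ : A₁.comp S₁ = S.comp A₁)
    (A₂ : lp (fun _ : ℕ => W₂) 2 →L[ℂ] lp (fun _ : ℕ => K) 2)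
    (hA₂iso : ∀ x, ‖A₂ x‖ = ‖x‖) (hA₂ : A₂.comp S₂ = S.comp A₂) :
    Set.range A₁ ⊆ Set.range A₂ ↔
      ∃ A : lp (fun _ : ℕ => W₁) 2 →L[ℂ] lp (fun _ : ℕ => W₂) 2,
        (∀ x, ‖A x‖ = ‖x‖) ∧ A.comp S₁ = S₂.comp A ∧ A₁ = A₂.comp A ∧
        A = (ContinuousLinearMap.adjoint A₂).comp A₁ := by
  constructor
  · intro hsub
    set A : lp (fun _ : ℕ => W₁) 2 →L[ℂ] lp (fun _ : ℕ => W₂) 2 :=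
      (ContinuousLinearMap.adjoint A₂).comp A₁ with hAdef
    have h2 : (ContinuousLinearMap.adjoint A₂).comp A₂ = 1 :=
      (A₂.norm_map_iff_adjoint_comp_self).mp hA₂iso
    -- A₂ (A x) = A₁ x
    have hfact : ∀ x, A₂ (A x) = A₁ x := by
      intro x
      obtain ⟨y, hy⟩ := hsub ⟨x, rfl⟩
      have : A x = y := by
        rw [hAdef, ContinuousLinearMap.comp_apply, ← hy]
        exact congrFun (congrArg DFunLike.coe h2) y
      rw [this, hy]
    have hiso : ∀ x, ‖A x‖ = ‖x‖ := by
      intro x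
      rw [← hA₂iso (A x), hfact, hA₁iso]
    have hcomp : A₁ = A₂.comp A := by
      ext x; simp [hfact x]
    refine ⟨A, hiso, ?_, hcomp, rfl⟩
    · refine ContinuousLinearMap.ext fun x => ?_
      have h1 : A₁ (S₁ x) = S (A₁ x) := by
        have := congrFun (congrArg DFunLike.coe hA₁) x
        simpa using this
      have h2' : ∀ z, A₂ (S₂ z) = S (A₂ z) := by
        intro z
        have := congrFun (congrArg DFunLike.coe hA₂) z
        simpa using this
      have : A (S₁ x) = S₂ (A x) := by
        calc A (S₁ x) = (ContinuousLinearMap.adjoint A₂) (A₁ (S₁ x)) := rfl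
          _ = (ContinuousLinearMap.adjoint A₂) (S (A₂ (A x))) := by rw [h1, hfact]
          _ = (ContinuousLinearMap.adjoint A₂) (A₂ (S₂ (A x))) := by rw [h2']
          _ = S₂ (A x) := by
              have := congrFun (congrArg DFunLike.coe h2) (S₂ (A x))
              simpa using this
      exact this
  · rintro ⟨A, _, _, hcomp, _⟩
    rintro y ⟨x, rfl⟩
    exact ⟨A x, by rw [hcomp]; rfl⟩
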